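/- Every injection σ : F → ℕ^r defined on a finite subset F ⊆ ℕ^r that satisfies σ(α)∧σ(β) = α∧β for all α, β ∈ F can be extended to a bijection π : ℕ^r → ℕ^r satisfying π(α)∧π(β) = α∧β for all α, β ∈ ℕ^r (i.e., to an element of H_r). -/

import Mathlib

/-- The leaves `ℕ^r` of the infinitary rooted tree of depth `r`, encoded as lists of length `r`. -/
def Leaf (r : ℕ) : Type := {l : List ℕ // l.length = r}

/-- The path `p(α)` from the root to a leaf `α`, as the finite set of prefixes of `α`. -/
def pathFinset {r : ℕ} (α : Leaf r) : Finset (List ℕ) :=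
  (Finset.range (r + 1)).image (fun k => α.val.take k)

/-- `α ∧ β`, the number of common vertices on the root-paths of `α` and `β`. -/
def wedge {r : ℕ} (α β : Leaf r) : ℕ := (pathFinset α ∩ pathFinset β).card

open Classical in
/-- Any finite partial injection of `ℕ` extends to a permutation. -/
lemma exists_perm_extend (A : Set ℕ) (hA : A.Finite) (f : ℕ → ℕ) (hf : Set.InjOn f A) :
    ∃ g : ℕ ≃ ℕ, ∀ a ∈ A, g a = f a := by
  classical
  haveI : Infinite (Aᶜ : Set ℕ) := (hA.infinite_compl).to_subtype
  haveI : Infinite ((f '' A)ᶜ : Set ℕ) := ((hA.image f).infinite_compl).to_subtype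
  haveI : Denumerable (Aᶜ : Set ℕ) := Nat.Subtype.denumerable _
  haveI : Denumerable ((f '' A)ᶜ : Set ℕ) := Nat.Subtype.denumerable _
  have e₁ : (Aᶜ : Set ℕ) ≃ ((f '' A)ᶜ : Set ℕ) :=
    (Denumerable.eqv _).trans (Denumerable.eqv _).symm
  obtain ⟨g, hg⟩ := (Equiv.Set.compl (Equiv.Set.imageOfInjOn f A hf)).symm e₁
  refine ⟨g, fun a ha => ?_⟩
  exact (hg ⟨a, ha⟩).trans rfl

/-- Apply a family of permutations along a list, vertex by vertex. -/
def build (g : List ℕ → ℕ ≃ ℕ) : List ℕ → List ℕ → List ℕ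
  | _, [] => []
  | s, a :: l => g s a :: build g (s ++ [a]) l

def buildInv (g : List ℕ → ℕ ≃ ℕ) : List ℕ → List ℕ → List ℕ
  | _, [] => []
  | s, b :: l => (g s).symm b :: buildInv g (s ++ [(g s).symm b]) l

lemma build_length (g : List ℕ → ℕ ≃ ℕ) : ∀ (l s : List ℕ), (build g s l).length = l.length
  | [], _ => rfl
  | a :: l, s => by simp [build, build_length g l]

lemma buildInv_length (g : List ℕ → ℕ ≃ ℕ) :
    ∀ (l s : List ℕ), (buildInv g s l).length = l.length
  | [], _ => rfl
  | a :: l, s => by simp [buildInv, buildInv_length g l]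

lemma buildInv_build (g : List ℕ → ℕ ≃ ℕ) : ∀ (l s : List ℕ), buildInv g s (build g s l) = l
  | [], _ => rfl
  | a :: l, s => by simp [build, buildInv, buildInv_build g l]

lemma build_buildInv (g : List ℕ → ℕ ≃ ℕ) : ∀ (l s : List ℕ), build g s (buildInv g s l) = l
  | [], _ => rfl
  | a :: l, s => by simp [build, buildInv, build_buildInv g l]

lemma build_take (g : List ℕ → ℕ ≃ ℕ) :
    ∀ (l s : List ℕ) (k : ℕ), build g s (l.take k) = (build g s l).take k
  | [], _, _ => by simp [build]
  | a :: l, s, 0 => rfl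
  | a :: l, s, k + 1 => by simp [build, build_take g l]

lemma build_inj (g : List ℕ → ℕ ≃ ℕ) :
    ∀ (l m s : List ℕ), build g s l = build g s m → l = m
  | [], [], _, _ => rfl
  | [], _ :: _, _, h => by simp [build] at h
  | _ :: _, [], _, h => by simp [build] at h
  | a :: l, b :: m, s, h => by
      simp only [build, List.cons.injEq, EmbeddingLike.apply_eq_iff_eq] at h
      obtain ⟨rfl, h2⟩ := h
      rw [build_inj g l m _ h2]

section Wedge
variable {r : ℕ}

lemma take_length {α : Leaf r} {k : ℕ} (hk : k ≤ r) : (α.val.take k).length = k := by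
  have := α.property
  simp [this, hk]

lemma wedge_eq_card (α β : Leaf r) :
    wedge α β =
      ((Finset.range (r + 1)).filter (fun k => α.val.take k = β.val.take k)).card := by
  classical
  have himg : pathFinset α ∩ pathFinset β =
      ((Finset.range (r + 1)).filter (fun k => α.val.take k = β.val.take k)).image
        (fun k => α.val.take k) := by
    ext x
    simp only [Finset.mem_inter, pathFinset, Finset.mem_image, Finset.mem_filter,
      Finset.mem_range]
    constructor
    · rintro ⟨⟨k, hk, rfl⟩, ⟨j, hj, hx⟩⟩
      have hkj : k = j := by
        have h1 : (α.val.take k).length = k := take_length (by omega)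
        have h2 : (β.val.take j).length = j := take_length (by omega)
        rw [hx] at h2; omega
      subst hkj
      exact ⟨k, ⟨hk, hx.symm⟩, rfl⟩
    · rintro ⟨k, ⟨hk, he⟩, rfl⟩
      exact ⟨⟨k, hk, rfl⟩, ⟨k, hk, he.symm⟩⟩
  rw [wedge, himg, Finset.card_image_of_injOn]
  intro k hk j hj he
  simp only [Finset.mem_coe, Finset.mem_filter, Finset.mem_range] at hk hj
  have he' : α.val.take k = α.val.take j := he
  have h1 : (α.val.take k).length = k := take_length (by omega)
  have h2 : (α.val.take j).length = j := take_length (by omega)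
  rw [he'] at h1; omega

lemma take_eq_iff_lt_wedge (α β : Leaf r) {k : ℕ} (hk : k ≤ r) :
    α.val.take k = β.val.take k ↔ k < wedge α β := by
  classical
  rw [wedge_eq_card]
  set S := (Finset.range (r + 1)).filter (fun k => α.val.take k = β.val.take k) with hS
  have hdc : ∀ j k, j ≤ k → k ∈ S → j ∈ S := by
    intro j k hjk hk
    simp only [hS, Finset.mem_filter, Finset.mem_range] at hk ⊢
    refine ⟨by omega, ?_⟩
    have := congrArg (List.take j) hk.2
    simpa [List.take_take, Nat.min_eq_left hjk] using this
  constructor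
  · intro he
    have hkS : k ∈ S := by
      simp only [hS, Finset.mem_filter, Finset.mem_range]; exact ⟨by omega, he⟩
    have : Finset.range (k + 1) ⊆ S := by
      intro j hj
      simp only [Finset.mem_range] at hj
      exact hdc j k (by omega) hkS
    have := Finset.card_le_card this
    simpa using this
  · intro hlt
    by_contra hne
    have hsub : S ⊆ Finset.range k := by
      intro j hj
      simp only [Finset.mem_range]
      by_contra hjk
      exact hne (by
        have := hdc k j (by omega) hj
        simp only [hS, Finset.mem_filter] at this
        exact this.2)
    have := Finset.card_le_card hsub
    simp only [Finset.card_range] at this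
    omega

end Wedge

/-- any wedge-preserving injection defined on a finite subset of `ℕ^r` extends
to a wedge-preserving bijection of `ℕ^r`, i.e. to an element of `H_r`. -/
theorem finite_extension_to_Hr (r : ℕ) (F : Finset (Leaf r)) (σ : Leaf r → Leaf r)
    (hinj : Set.InjOn σ F)
    (hwedge : ∀ α ∈ F, ∀ β ∈ F, wedge (σ α) (σ β) = wedge α β) :
    ∃ π : Leaf r → Leaf r, Function.Bijective π ∧
      (∀ α β : Leaf r, wedge (π α) (π β) = wedge α β) ∧
      ∀ α ∈ F, π α = σ α := by
  classical
  -- the partial child-map at vertex `s`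
  set f : List ℕ → ℕ → ℕ := fun s a =>
    if h : ∃ α, α ∈ F ∧ (s ++ [a]) <+: α.val then (σ h.choose).val.getD s.length 0 else 0
    with hf_def
  -- prefix facts
  have hpre_take : ∀ (α : Leaf r) (s : List ℕ) (a : ℕ), (s ++ [a]) <+: α.val →
      α.val.take (s.length + 1) = s ++ [a] := by
    intro α s a h
    have := List.prefix_iff_eq_take.mp h
    simpa using this.symm
  have hpre_len : ∀ (α : Leaf r) (s : List ℕ) (a : ℕ), (s ++ [a]) <+: α.val →
      s.length + 1 ≤ r := by
    intro α s a h
    have := h.length_le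
    simpa [α.property] using this
  -- well-definedness of `f`
  have hf_spec : ∀ (s : List ℕ) (a : ℕ) (α : Leaf r), α ∈ F → (s ++ [a]) <+: α.val →
      f s a = (σ α).val.getD s.length 0 := by
    intro s a α hα hpre
    have hex : ∃ γ, γ ∈ F ∧ (s ++ [a]) <+: γ.val := ⟨α, hα, hpre⟩
    have hβ := hex.choose_spec
    set β := hex.choose with hβdef
    have hr1 : s.length + 1 ≤ r := hpre_len α s a hpre
    have htake : α.val.take (s.length + 1) = β.val.take (s.length + 1) := by
      rw [hpre_take α s a hpre, hpre_take β s a hβ.2]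
    have hw : s.length + 1 < wedge α β := (take_eq_iff_lt_wedge α β hr1).mp htake
    rw [← hwedge α hα β hβ.1] at hw
    have htakeσ := (take_eq_iff_lt_wedge (σ α) (σ β) hr1).mpr hw
    have : (σ α).val.getD s.length 0 = (σ β).val.getD s.length 0 := by
      have h1 := congrArg (fun l => l.getD s.length 0) htakeσ
      simpa [List.getD, List.getElem?_take, Nat.lt_succ_self] using h1
    rw [hf_def]
    simp only [dif_pos hex]
    exact this.symm
  -- injectivity of `f s` on its domain
  have hf_inj : ∀ s : List ℕ,
      Set.InjOn (f s) {a | ∃ α, α ∈ F ∧ (s ++ [a]) <+: α.val} := by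
    intro s a ha b hb hab
    obtain ⟨α, hα, hpα⟩ := ha
    obtain ⟨β, hβ, hpβ⟩ := hb
    by_contra hne
    have hr1 : s.length + 1 ≤ r := hpre_len α s a hpα
    -- takes at s.length+1 differ, at s.length agree
    have ht1 : α.val.take (s.length + 1) ≠ β.val.take (s.length + 1) := by
      rw [hpre_take α s a hpα, hpre_take β s b hpβ]
      simp [hne]
    have ht0 : α.val.take s.length = β.val.take s.length := by
      have h1 := congrArg (List.take s.length) (hpre_take α s a hpα)
      have h2 := congrArg (List.take s.length) (hpre_take β s b hpβ)
      rw [List.take_take] at h1 h2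
      simp only [Nat.min_eq_left (Nat.le_succ _)] at h1 h2
      rw [h1, h2]
      simp
    have hwab : wedge α β = s.length + 1 := by
      have hlo : s.length < wedge α β := (take_eq_iff_lt_wedge α β (by omega)).mp ht0
      have hhi : ¬ (s.length + 1 < wedge α β) := fun h =>
        ht1 ((take_eq_iff_lt_wedge α β hr1).mpr h)
      omega
    have hwσ : wedge (σ α) (σ β) = s.length + 1 := by rw [hwedge α hα β hβ]; exact hwab
    have ht0σ : (σ α).val.take s.length = (σ β).val.take s.length :=
      (take_eq_iff_lt_wedge (σ α) (σ β) (Nat.le_of_succ_le hr1)).mpr (by omega)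
    have ht1σ : (σ α).val.take (s.length + 1) ≠ (σ β).val.take (s.length + 1) := by
      intro h
      have := (take_eq_iff_lt_wedge (σ α) (σ β) hr1).mp h
      omega
    -- but f-values being equal forces the takes at s.length+1 to agree
    apply ht1σ
    have hga : (σ α).val.getD s.length 0 = (σ β).val.getD s.length 0 := by
      rw [← hf_spec s a α hα hpα, ← hf_spec s b β hβ hpβ, hab]
    have hlenα : s.length < (σ α).val.length := by rw [(σ α).property]; omega
    have hlenβ : s.length < (σ β).val.length := by rw [(σ β).property]; omega
    have hga' : (σ α).val[s.length]? = (σ β).val[s.length]? := by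
      rw [List.getElem?_eq_getElem hlenα, List.getElem?_eq_getElem hlenβ,
        ← List.getD_eq_getElem _ 0 hlenα, ← List.getD_eq_getElem _ 0 hlenβ, hga]
    rw [List.take_succ, List.take_succ, ht0σ, hga']
  -- extend each `f s` to a permutation
  have hAfin : ∀ s : List ℕ, Set.Finite {a | ∃ α, α ∈ F ∧ (s ++ [a]) <+: α.val} := by
    intro s
    apply Set.Finite.subset (Set.finite_range (fun α : F => (α : Leaf r).val.getD s.length 0))
    rintro a ⟨α, hα, hpre⟩
    refine ⟨⟨α, hα⟩, ?_⟩
    have h1 := hpre_take α s a hpre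
    have h2 := congrArg (fun l => l.getD s.length 0) h1
    simpa [List.getD, List.getElem?_take, Nat.lt_succ_self] using h2
  have hg : ∀ s : List ℕ, ∃ g : ℕ ≃ ℕ,
      ∀ a ∈ {a | ∃ α, α ∈ F ∧ (s ++ [a]) <+: α.val}, g a = f s a := fun s =>
    exists_perm_extend _ (hAfin s) (f s) (hf_inj s)
  choose g hg using hg
  -- the bijection
  refine ⟨fun α => ⟨build g [] α.val, by rw [build_length]; exact α.property⟩, ?_, ?_, ?_⟩
  · refine Function.bijective_iff_has_inverse.mpr
      ⟨fun α => ⟨buildInv g [] α.val, by rw [buildInv_length]; exact α.property⟩, ?_, ?_⟩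
    · intro α; exact Subtype.ext (buildInv_build g α.val [])
    · intro α; exact Subtype.ext (build_buildInv g α.val [])
  · intro α β
    rw [wedge_eq_card α β]; refine (wedge_eq_card _ _).trans ?_
    congr 1
    apply Finset.filter_congr
    intro k hk
    simp only [Finset.mem_range] at hk
    show (build g [] α.val).take k = (build g [] β.val).take k ↔ _
    rw [← build_take, ← build_take]
    exact ⟨fun h => by simpa using build_inj g _ _ [] h, fun h => by rw [h]⟩
  · intro α hα
    apply Subtype.ext
    show build g [] α.val = (σ α).val
    have key : ∀ (l s : List ℕ), s ++ l = α.val → build g s l = (σ α).val.drop s.length := by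
      intro l
      induction l with
      | nil =>
        intro s hs
        simp only [List.append_nil] at hs
        subst hs
        have hd : List.drop (α.val).length (σ α).val = [] :=
          List.drop_eq_nil_of_le (le_of_eq ((σ α).property.trans α.property.symm))
        rw [hd]
        rfl
      | cons a l ih =>
        intro s hs
        have hpre : (s ++ [a]) <+: α.val := ⟨l, by simpa using hs⟩
        have hlen : s.length < r := by
          have := hpre_len α s a hpre; omega
        have hglen : s.length < (σ α).val.length := by rw [(σ α).property]; exact hlen
        have hg1 : g s a = (σ α).val.getD s.length 0 := by
          rw [hg s a ⟨α, hα, hpre⟩]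
          exact hf_spec s a α hα hpre
        have hdrop : (σ α).val.drop s.length
            = (σ α).val.getD s.length 0 :: (σ α).val.drop (s.length + 1) := by
          rw [List.getD_eq_getElem _ _ hglen]
          exact List.drop_eq_getElem_cons hglen
        rw [build, hdrop, ← hg1]
        congr 1
        have := ih (s ++ [a]) (by simpa using hs)
        simpa using this
    have := key α.val [] rfl
    simpa using this
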